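/- If L₁, L₂, C are regular languages over Σ, then the set I = { p □ s | ps ∈ C, p ∈ L₁, s ∈ L₂, and no nonempty prefix of s can be absorbed: ¬∃ w₃ ≠ λ, w₄ with s = w₃w₄, p w₃ ∈ L₁, w₄ ∈ L₂ } is a regular language over Σ ∪ {□}. -/

import Mathlib

/-- The extended alphabet `A ∪ {□}` is modeled as `Option A` (`none` is `□`).
The erasing homomorphism `π` maps each letter of `A` to itself and `□` to the
empty word. -/
def eraseBox {A : Type} (w : List (Option A)) : List A := w.filterMap id

/-- Inverse image `π⁻¹(L)` of a language `L ⊆ A*` under the erasing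
homomorphism. -/
def piInv {A : Type} (L : Set (List A)) : Set (List (Option A)) :=
  {w | eraseBox w ∈ L}

/-- The embedding of a language over `A` into the extended alphabet
`A ∪ {□}`. -/
def emb {A : Type} (L : Set (List A)) : Set (List (Option A)) :=
  {w | ∃ u ∈ L, w = u.map some}

/-- Concatenation of languages. -/
def conc {X : Type} (L K : Set (List X)) : Set (List X) :=
  {w | ∃ u ∈ L, ∃ v ∈ K, w = u ++ v}

/-- The singleton language `{□}` over the extended alphabet. -/
def boxLang {A : Type} : Set (List (Option A)) := {[none]}

/-- The longest-match condition `c(p,s)`: no nonempty prefix of `s` can be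
absorbed into the `L₁`-part. -/
def lmCond {A : Type} (L₁ L₂ : Set (List A)) (p s : List A) : Prop :=
  ¬ ∃ w₃ w₄, w₃ ≠ [] ∧ s = w₃ ++ w₄ ∧ p ++ w₃ ∈ L₁ ∧ w₄ ∈ L₂

/-- The set `I = { w₁ □ w₂ | w₁w₂ ∈ C, w₁ ∈ L₁, w₂ ∈ L₂, c(w₁,w₂) }`. -/
def Iset {A : Type} (L₁ L₂ C : Set (List A)) : Set (List (Option A)) :=
  {w | ∃ p s, w = p.map some ++ none :: s.map some ∧
    p ++ s ∈ C ∧ p ∈ L₁ ∧ s ∈ L₂ ∧ lmCond L₁ L₂ p s}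

namespace IsetAux

variable {A σ₁ σ₂ σC : Type}

open Classical

/-- The state type of the combined automaton. -/
abbrev St (σ₁ σ₂ σC : Type) : Type :=
  (σ₁ × σC) ⊕ (Bool × σ₁ × σC × σ₂ × Set σ₂) ⊕ Unit

/-- The combined automaton recognizing `Iset`. -/
noncomputable def comb (M₁ : DFA A σ₁) (M₂ : DFA A σ₂) (MC : DFA A σC) :
    DFA (Option A) (St σ₁ σ₂ σC) where
  step st o :=
    match st, o with
    | .inl (q₁, qC), some a => .inl (M₁.step q₁ a, MC.step qC a)
    | .inl (q₁, qC), none =>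
        .inr (.inl (if q₁ ∈ M₁.accept then true else false, q₁, qC, M₂.start, ∅))
    | .inr (.inl (f, r₁, rC, r₂, T)), some a =>
        .inr (.inl (f, M₁.step r₁ a, MC.step rC a, M₂.step r₂ a,
          (fun q => M₂.step q a) '' T ∪
            (if M₁.step r₁ a ∈ M₁.accept then {M₂.start} else ∅)))
    | .inr (.inl _), none => .inr (.inr ())
    | .inr (.inr _), _ => .inr (.inr ())
  start := .inl (M₁.start, MC.start)
  accept := { st | ∃ r₁ rC r₂ T, st = .inr (.inl (true, r₁, rC, r₂, T)) ∧
      rC ∈ MC.accept ∧ r₂ ∈ M₂.accept ∧ T ∩ M₂.accept = ∅ }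

/-- The set tracked in the fifth component. -/
def Tfun (M₁ : DFA A σ₁) (M₂ : DFA A σ₂) (r₁ : σ₁) (T : Set σ₂) (s : List A) : Set σ₂ :=
  {q | (∃ t ∈ T, q = M₂.evalFrom t s) ∨
    ∃ u v, s = u ++ v ∧ u ≠ [] ∧ M₁.evalFrom r₁ u ∈ M₁.accept ∧ q = M₂.evalFrom M₂.start v}

variable (M₁ : DFA A σ₁) (M₂ : DFA A σ₂) (MC : DFA A σC)

lemma Tfun_nil (r₁ : σ₁) (T : Set σ₂) : Tfun M₁ M₂ r₁ T [] = T := by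
  ext q
  simp only [Tfun, Set.mem_setOf_eq, DFA.evalFrom_nil]
  constructor
  · rintro (⟨t, ht, rfl⟩ | ⟨u, v, huv, hu, -, -⟩)
    · exact ht
    · exact absurd (List.append_eq_nil_iff.mp huv.symm).1 hu
  · intro hq; exact Or.inl ⟨q, hq, rfl⟩

lemma Tfun_cons (a : A) (s : List A) (r₁ : σ₁) (T : Set σ₂) :
    Tfun M₁ M₂ r₁ T (a :: s) =
      Tfun M₁ M₂ (M₁.step r₁ a)
        ((fun q => M₂.step q a) '' T ∪
          (if M₁.step r₁ a ∈ M₁.accept then {M₂.start} else ∅)) s := by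
  ext q
  simp only [Tfun, Set.mem_setOf_eq]
  constructor
  · rintro (⟨t, ht, rfl⟩ | ⟨u, v, huv, hu, hacc, rfl⟩)
    · exact Or.inl ⟨M₂.step t a, Set.mem_union_left _ ⟨t, ht, rfl⟩, rfl⟩
    · match u, huv with
      | b :: u', huv =>
        obtain ⟨hab, hs⟩ : a = b ∧ s = u' ++ v := by
          simpa using huv
        subst hab
        rcases eq_or_ne u' [] with rfl | hu'
        · have hsa : M₁.step r₁ a ∈ M₁.accept := by
            simpa [DFA.evalFrom] using hacc
          refine Or.inl ⟨M₂.start, Set.mem_union_right _ (by simp [hsa]), ?_⟩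
          simp only [List.nil_append] at hs
          rw [hs]
        · refine Or.inr ⟨u', v, hs, hu', ?_, rfl⟩
          simpa [DFA.evalFrom] using hacc
  · rintro (⟨t, ht, rfl⟩ | ⟨u, v, rfl, hu, hacc, rfl⟩)
    · rcases ht with ⟨t₀, ht₀, rfl⟩ | hst
      · exact Or.inl ⟨t₀, ht₀, by simp [DFA.evalFrom]⟩
      · by_cases hsa : M₁.step r₁ a ∈ M₁.accept
        · rw [if_pos hsa] at hst
          rcases hst with rfl
          exact Or.inr ⟨[a], s, rfl, by simp, by simpa [DFA.evalFrom] using hsa, rfl⟩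
        · rw [if_neg hsa] at hst
          exact absurd hst (Set.notMem_empty _)
    · refine Or.inr ⟨a :: u, v, rfl, by simp, ?_, rfl⟩
      simpa [DFA.evalFrom] using hacc

lemma evalA (p : List A) : ∀ q₁ qC,
    (comb M₁ M₂ MC).evalFrom (.inl (q₁, qC)) (p.map some) =
      .inl (M₁.evalFrom q₁ p, MC.evalFrom qC p) := by
  induction p with
  | nil => intro q₁ qC; rfl
  | cons a p ih =>
    intro q₁ qC
    simpa [DFA.evalFrom, comb] using ih (M₁.step q₁ a) (MC.step qC a)

lemma evalDead (x : List (Option A)) :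
    (comb M₁ M₂ MC).evalFrom (.inr (.inr ())) x = .inr (.inr ()) := by
  induction x with
  | nil => rfl
  | cons o x ih => simpa [DFA.evalFrom, comb] using ih

lemma evalB (s : List A) : ∀ (f : Bool) r₁ rC r₂ (T : Set σ₂),
    (comb M₁ M₂ MC).evalFrom (.inr (.inl (f, r₁, rC, r₂, T))) (s.map some) =
      .inr (.inl (f, M₁.evalFrom r₁ s, MC.evalFrom rC s, M₂.evalFrom r₂ s,
        Tfun M₁ M₂ r₁ T s)) := by
  induction s with
  | nil => intro f r₁ rC r₂ T; simp [Tfun_nil]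
  | cons a s ih =>
    intro f r₁ rC r₂ T
    rw [Tfun_cons]
    simpa [DFA.evalFrom, comb] using
      ih f (M₁.step r₁ a) (MC.step rC a) (M₂.step r₂ a)
        ((fun q => M₂.step q a) '' T ∪
          (if M₁.step r₁ a ∈ M₁.accept then {M₂.start} else ∅))

lemma eval_ps (p s : List A) :
    (comb M₁ M₂ MC).eval (p.map some ++ none :: s.map some) =
      .inr (.inl ((if M₁.eval p ∈ M₁.accept then true else false),
        M₁.evalFrom (M₁.eval p) s, MC.eval (p ++ s), M₂.eval s,
        Tfun M₁ M₂ (M₁.eval p) ∅ s)) := by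
  rw [DFA.eval, DFA.evalFrom_of_append]
  have h1 : (comb M₁ M₂ MC).evalFrom (comb M₁ M₂ MC).start (p.map some) =
      .inl (M₁.eval p, MC.eval p) := evalA M₁ M₂ MC p _ _
  rw [h1]
  show (comb M₁ M₂ MC).evalFrom
      ((comb M₁ M₂ MC).step (.inl (M₁.eval p, MC.eval p)) none) (s.map some) = _
  have h2 : (comb M₁ M₂ MC).step (.inl (M₁.eval p, MC.eval p)) none =
      .inr (.inl (if M₁.eval p ∈ M₁.accept then true else false,
        M₁.eval p, MC.eval p, M₂.start, ∅)) := rfl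
  rw [h2, evalB]
  rw [show MC.eval (p ++ s) = MC.evalFrom (MC.eval p) s from
    MC.evalFrom_of_append MC.start p s]
  rfl

/-- Decomposition of a word over the extended alphabet at its first box. -/
lemma decomp (x : List (Option A)) :
    (∃ p : List A, x = p.map some) ∨
      (∃ (p : List A) (r : List (Option A)), x = p.map some ++ none :: r) := by
  induction x with
  | nil => exact Or.inl ⟨[], rfl⟩
  | cons o x ih =>
    cases o with
    | none => exact Or.inr ⟨[], x, rfl⟩
    | some a =>
      rcases ih with ⟨p, rfl⟩ | ⟨p, r, rfl⟩
      · exact Or.inl ⟨a :: p, rfl⟩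
      · exact Or.inr ⟨a :: p, r, rfl⟩

end IsetAux

open IsetAux in
/-- If `L₁`, `L₂`, `C` are regular languages over `A`, then
`I = { p □ s | ps ∈ C, p ∈ L₁, s ∈ L₂, c(p,s) }` is a regular language over
the extended alphabet `A ∪ {□}`. -/
theorem Iset_isRegular {A : Type} [Fintype A] (L₁ L₂ C : Language A)
    (h₁ : L₁.IsRegular) (h₂ : L₂.IsRegular) (hC : C.IsRegular) :
    Language.IsRegular (Iset (L₁ : Set (List A)) L₂ C : Language (Option A)) := by
  obtain ⟨σ₁, i₁, M₁, rfl⟩ := h₁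
  obtain ⟨σ₂, i₂, M₂, rfl⟩ := h₂
  obtain ⟨σC, iC, MC, rfl⟩ := hC
  refine ⟨St σ₁ σ₂ σC, inferInstance, comb M₁ M₂ MC, ?_⟩
  ext x
  rw [DFA.mem_accepts]
  constructor
  · intro hx
    obtain ⟨r₁', rC', r₂', T', heq, hCacc, h2acc, hT⟩ := hx
    rcases decomp x with ⟨p, rfl⟩ | ⟨p, r, rfl⟩
    · rw [show (comb M₁ M₂ MC).eval (p.map some) = .inl (M₁.eval p, MC.eval p) from
        evalA M₁ M₂ MC p _ _] at heq
      exact absurd heq (by simp)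
    rcases decomp r with ⟨s, rfl⟩ | ⟨s, t, rfl⟩
    · rw [eval_ps] at heq
      simp only [Sum.inr.injEq, Sum.inl.injEq, Prod.mk.injEq] at heq
      obtain ⟨hflag, hr₁, hrC, hr₂, hT'⟩ := heq
      subst hrC hr₂ hT'
      have hp : p ∈ M₁.accepts := by
        rw [DFA.mem_accepts]
        by_contra h
        rw [if_neg h] at hflag
        exact Bool.false_ne_true hflag
      refine ⟨p, s, rfl, ?_, hp, ?_, ?_⟩
      · exact hCacc
      · exact h2acc
      · rintro ⟨w₃, w₄, hne, hsplit, hm1, hm2⟩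
        have hq : M₂.eval w₄ ∈ Tfun M₁ M₂ (M₁.eval p) ∅ s := by
          refine Or.inr ⟨w₃, w₄, hsplit, hne, ?_, rfl⟩
          have h := hm1
          change p ++ w₃ ∈ (M₁.accepts : Language A) at h
          rw [DFA.mem_accepts, DFA.eval, DFA.evalFrom_of_append] at h
          exact h
        have hq2 : M₂.eval w₄ ∈ M₂.accept := hm2
        exact Set.eq_empty_iff_forall_notMem.mp hT (M₂.eval w₄) ⟨hq, hq2⟩
    · exfalso
      have : (comb M₁ M₂ MC).eval ((p.map some ++ none :: (s.map some ++ none :: t))) =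
          .inr (.inr ()) := by
        rw [show p.map some ++ none :: (s.map some ++ none :: t) =
            (p.map some ++ none :: s.map some) ++ none :: t by simp]
        rw [DFA.eval, DFA.evalFrom_of_append]
        rw [show (comb M₁ M₂ MC).evalFrom (comb M₁ M₂ MC).start
            (p.map some ++ none :: s.map some) = _ from eval_ps M₁ M₂ MC p s]
        show (comb M₁ M₂ MC).evalFrom
          ((comb M₁ M₂ MC).step _ none) t = _
        exact evalDead M₁ M₂ MC t
      rw [this] at heq
      simp at heq
  · rintro ⟨p, s, rfl, hCm, h1m, h2m, hlm⟩
    rw [eval_ps]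
    refine ⟨M₁.evalFrom (M₁.eval p) s, MC.eval (p ++ s), M₂.eval s,
      Tfun M₁ M₂ (M₁.eval p) ∅ s, ?_, hCm, h2m, ?_⟩
    · rw [if_pos (by exact h1m)]
    · ext q
      simp only [Set.mem_inter_iff, Set.mem_empty_iff_false, iff_false, not_and]
      intro hq hq2
      rcases hq with ⟨t, ht, -⟩ | ⟨u, v, rfl, hu, hacc, rfl⟩
      · exact ht
      · refine hlm ⟨u, v, hu, rfl, ?_, ?_⟩
        · show p ++ u ∈ M₁.accepts
          rw [DFA.mem_accepts, DFA.eval, DFA.evalFrom_of_append]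
          exact hacc
        · exact hq2
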